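/- Up to permutation of partitions, the only indivisible basic tuples m with idx(m) = 0 are: (1²,1²,1²,1²) of order 2, (1³,1³,1³) of order 3, (2²,1⁴,1⁴) of order 4, and (3²,2³,1⁶) of order 6. -/

import Mathlib

lemma sqsum_le (a : ℕ) : ∀ l : List ℕ, (∀ x ∈ l, x ≤ a) → (l.map (fun x => x^2)).sum ≤ a * l.sum
  | [], _ => by simp
  | x :: l, h => by
    simp only [List.map_cons, List.sum_cons, Nat.mul_add]
    have h1 : x^2 ≤ a * x := by nlinarith [h x List.mem_cons_self]
    have h2 := sqsum_le a l (fun y hy => h y (List.mem_cons_of_mem _ hy))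
    omega

lemma sqsum_eq (a : ℕ) : ∀ l : List ℕ, (∀ x ∈ l, 0 < x ∧ x ≤ a) →
    (l.map (fun x => x^2)).sum = a * l.sum → ∀ x ∈ l, x = a
  | [], _, _ => by simp
  | y :: l, h, heq => fun x hx => by
    have hy := h y List.mem_cons_self
    have htail := fun z hz => h z (List.mem_cons_of_mem _ hz)
    have h2 := sqsum_le a l (fun z hz => (htail z hz).2)
    simp only [List.map_cons, List.sum_cons, Nat.mul_add] at heq
    have h1 : y^2 ≤ a * y := by nlinarith [hy.2]
    have hya : y = a := by nlinarith [hy.1, hy.2]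
    rcases List.mem_cons.mp hx with rfl | hx'
    · exact hya
    · exact sqsum_eq a l htail (by nlinarith) x hx'

lemma coe_list (l : List ℕ) : (do let a ← l; pure ((a:ℤ))) = l.map (fun a : ℕ => (a:ℤ)) := by
  induction l <;> simp_all

lemma cast_sqsum : ∀ (l : List ℕ),
    (List.map (fun x : ℤ => x ^ 2) (l.map (fun a : ℕ => (a:ℤ)))).sum
      = (((l.map (fun x => x^2)).sum : ℕ) : ℤ)
  | [] => by simp
  | x :: l => by
    simp only [List.map_cons, List.sum_cons, cast_sqsum l]
    push_cast
    ring

lemma bnd (x y z : ℕ) (hx : 2 ≤ x) (hy : 2 ≤ y) (hz : 2 ≤ z)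
    (h : y*z + x*z + x*y = x*y*z) : x ≤ 6 := by
  rcases Nat.lt_or_ge y 3 with hy3 | hy3
  · rcases Nat.lt_or_ge z 3 with hz3 | hz3
    · interval_cases y <;> interval_cases z <;> omega
    · by_contra hc
      push_neg at hc
      have hx7 : (7:ℤ) ≤ x := by exact_mod_cast hc
      have hz3' : (3:ℤ) ≤ z := by exact_mod_cast hz3
      have hy2 : (2:ℤ) ≤ y := by exact_mod_cast hy
      have h' : (y:ℤ)*z + x*z + x*y = x*y*z := by exact_mod_cast h
      have h1 : (0:ℤ) ≤ ((y:ℤ)-2)*((z:ℤ)-3) := mul_nonneg (by linarith) (by linarith)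
      have hfac : (0:ℤ) ≤ (y:ℤ)*z - y - z := by nlinarith
      nlinarith [mul_le_mul_of_nonneg_right hx7 hfac]
  · by_contra hc
    push_neg at hc
    have hx7 : (7:ℤ) ≤ x := by exact_mod_cast hc
    have hy3' : (3:ℤ) ≤ y := by exact_mod_cast hy3
    have hz2 : (2:ℤ) ≤ z := by exact_mod_cast hz
    have h' : (y:ℤ)*z + x*z + x*y = x*y*z := by exact_mod_cast h
    have h1 : (0:ℤ) ≤ ((y:ℤ)-3)*((z:ℤ)-2) := mul_nonneg (by linarith) (by linarith)
    have hfac : (0:ℤ) ≤ (y:ℤ)*z - y - z := by nlinarith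
    nlinarith [mul_le_mul_of_nonneg_right hx7 hfac]

/-- The index of rigidity of a tuple of `p` partitions of `n`. -/
def idx (p n : ℕ) (m : Fin p → List ℕ) : ℤ :=
  2 * (n : ℤ) ^ 2 - ∑ j : Fin p, ((n : ℤ) ^ 2 - ((m j).map (fun x => (x : ℤ) ^ 2)).sum)

/-- `m` is a tuple of `p` partitions of `n`: each `m j` is a monotone non-increasing
list of positive integers summing to `n` with at least two parts. -/
def IsTuple (p n : ℕ) (m : Fin p → List ℕ) : Prop :=
  0 < n ∧ ∀ j, (m j).Pairwise (· ≥ ·) ∧ (∀ x ∈ m j, 0 < x) ∧ (m j).sum = n ∧ 2 ≤ (m j).length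

/-- The tuple is indivisible: no integer `k ≥ 2` divides all the entries. -/
def Indivisible (p : ℕ) (m : Fin p → List ℕ) : Prop :=
  ∀ k : ℕ, (∀ j, ∀ x ∈ m j, k ∣ x) → k = 1

/-- The tuple is basic: it is a tuple of partitions, `2n ≤ Σⱼ (n − m_{j,1})`,
and it is indivisible. -/
def IsBasic (p n : ℕ) (m : Fin p → List ℕ) : Prop :=
  IsTuple p n m ∧ 2 * (n : ℤ) ≤ (∑ j : Fin p, ((n : ℤ) - ((m j).headI : ℤ)))
    ∧ Indivisible p m

/-- The tuple is fundamental: it is basic, or it is a positive integer multiple `k·m'`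
of a basic tuple `m'` with `idx m' ≠ 0`. -/
def IsFundamental (p n : ℕ) (m : Fin p → List ℕ) : Prop :=
  ∃ (k n' : ℕ) (m' : Fin p → List ℕ), 0 < k ∧ n = k * n' ∧
    (∀ j, m j = (m' j).map (fun x => k * x)) ∧ IsBasic p n' m' ∧
    (k = 1 ∨ idx p n' m' ≠ 0)

set_option maxHeartbeats 1600000 in
/-- Up to permutation of the partitions, the only indivisible basic tuples with
index of rigidity 0 are `1²,1²,1²,1²`, `1³,1³,1³`, `2²,1⁴,1⁴` and `3²,2³,1⁶`. -/
theorem basic_idx_zero_classification (p n : ℕ) (m : Fin p → List ℕ)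
    (hbasic : IsBasic p n m) (hidx : idx p n m = 0) :
    (Finset.univ.val.map m : Multiset (List ℕ)) = {[1,1], [1,1], [1,1], [1,1]} ∨
    (Finset.univ.val.map m : Multiset (List ℕ)) = {[1,1,1], [1,1,1], [1,1,1]} ∨
    (Finset.univ.val.map m : Multiset (List ℕ)) = {[2,2], [1,1,1,1], [1,1,1,1]} ∨
    (Finset.univ.val.map m : Multiset (List ℕ)) = {[3,3], [2,2,2], [1,1,1,1,1,1]} := by
  obtain ⟨⟨hn, hparts⟩, hsum2, hindiv⟩ := hbasic
  have hnZ : (0:ℤ) < n := by exact_mod_cast hn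
  -- the head is the maximum of each partition
  have hmax : ∀ j, ∀ x ∈ m j, x ≤ (m j).headI := by
    intro j x hx
    rcases hml : m j with _ | ⟨y, l⟩
    · rw [hml] at hx; simp at hx
    · have hsorted := (hparts j).1
      rw [hml] at hx hsorted
      rw [List.pairwise_cons] at hsorted
      rcases List.mem_cons.mp hx with rfl | hx'
      · simp
      · simpa using hsorted.1 x hx'
  -- rewrite the idx hypothesis
  unfold idx at hidx
  simp only [coe_list, cast_sqsum] at hidx
  have hFsum : ∑ j : Fin p, ((n:ℤ)^2 - (((m j).map (fun x => x^2)).sum : ℕ)) = 2*(n:ℤ)^2 := by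
    linarith [hidx]
  -- pointwise inequality
  have hG : ∀ j ∈ (Finset.univ : Finset (Fin p)),
      (n:ℤ)*((n:ℤ) - ((m j).headI : ℤ)) ≤ (n:ℤ)^2 - (((m j).map (fun x => x^2)).sum : ℕ) := by
    intro j _
    have h1 : ((m j).map (fun x => x^2)).sum ≤ (m j).headI * n := by
      have := sqsum_le (m j).headI (m j) (hmax j)
      rwa [(hparts j).2.2.1] at this
    have h1' : ((((m j).map (fun x => x^2)).sum :ℕ):ℤ) ≤ ((m j).headI : ℤ) * n := by
      exact_mod_cast h1
    nlinarith [h1']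
  have hGsum_ge : 2*(n:ℤ)^2 ≤ ∑ j : Fin p, (n:ℤ)*((n:ℤ) - ((m j).headI : ℤ)) := by
    rw [← Finset.mul_sum]
    calc 2*(n:ℤ)^2 = n * (2*n) := by ring
    _ ≤ _ := mul_le_mul_of_nonneg_left hsum2 (le_of_lt hnZ)
  have hle := Finset.sum_le_sum hG
  have hGsum : ∑ j : Fin p, (n:ℤ)*((n:ℤ) - ((m j).headI : ℤ)) = 2*(n:ℤ)^2 :=
    le_antisymm (by linarith [hle, hFsum]) hGsum_ge
  have hpt := (Finset.sum_eq_sum_iff_of_le hG).mp (by rw [hFsum, hGsum])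
  -- per partition: sum of squares equals head times n
  have hS : ∀ j, ((m j).map (fun x => x^2)).sum = (m j).headI * n := by
    intro j
    have h := hpt j (Finset.mem_univ j)
    have : ((((m j).map (fun x => x^2)).sum :ℕ):ℤ) = ((m j).headI : ℤ) * n := by
      linear_combination h
    exact_mod_cast this
  have helem : ∀ j, ∀ x ∈ m j, x = (m j).headI := by
    intro j
    exact sqsum_eq _ _ (fun x hx => ⟨(hparts j).2.1 x hx, hmax j x hx⟩)
      (by rw [(hparts j).2.2.1]; exact hS j)
  have hrep : ∀ j, m j = List.replicate (m j).length ((m j).headI) :=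
    fun j => List.eq_replicate_iff.mpr ⟨rfl, helem j⟩
  have hAL : ∀ j, (m j).headI * (m j).length = n := by
    intro j
    have h := (hparts j).2.2.1
    conv at h => rw [hrep j]
    rw [List.sum_replicate, smul_eq_mul] at h
    rw [Nat.mul_comm]; exact h
  have hA1 : ∀ j, 1 ≤ (m j).headI := by
    intro j
    rcases Nat.eq_zero_or_pos (m j).headI with h0 | h
    · exfalso; have := hAL j; rw [h0] at this; simp at this; omega
    · exact h
  have hL2 : ∀ j, 2 ≤ (m j).length := fun j => (hparts j).2.2.2
  have h2A : ∀ j, 2 * (m j).headI ≤ n := by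
    intro j
    calc 2 * (m j).headI ≤ (m j).length * (m j).headI := Nat.mul_le_mul_right _ (hL2 j)
    _ = n := by rw [Nat.mul_comm]; exact hAL j
  -- the sum of (n - head) is exactly 2n
  have hsum_eq : ∑ j : Fin p, ((n:ℤ) - ((m j).headI : ℤ)) = 2*(n:ℤ) := by
    have h1 : (n:ℤ) * ∑ j : Fin p, ((n:ℤ) - ((m j).headI : ℤ)) = (n:ℤ) * (2*(n:ℤ)) := by
      rw [Finset.mul_sum, hGsum]; ring
    exact mul_left_cancel₀ (ne_of_gt hnZ) h1
  -- bound p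
  have hp4 : p ≤ 4 := by
    have h1 : (p:ℤ) * n ≤ ∑ j : Fin p, 2*((n:ℤ) - ((m j).headI : ℤ)) := by
      calc (p:ℤ) * n = ∑ _j : Fin p, (n:ℤ) := by
            rw [Finset.sum_const, Finset.card_univ, Fintype.card_fin, nsmul_eq_mul]
      _ ≤ _ := Finset.sum_le_sum (by
            intro j _
            have := h2A j
            have h2 : ((2 * (m j).headI :ℕ):ℤ) ≤ (n:ℤ) := by exact_mod_cast this
            push_cast at h2
            linarith)
    rw [← Finset.mul_sum, hsum_eq] at h1
    have : (p:ℤ) ≤ 4 := by nlinarith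
    exact_mod_cast this
  have hp3 : 3 ≤ p := by
    have h2 : 2*(n:ℤ) ≤ (p:ℤ) * ((n:ℤ) - 1) := by
      calc 2*(n:ℤ) = ∑ j : Fin p, ((n:ℤ) - ((m j).headI : ℤ)) := hsum_eq.symm
      _ ≤ ∑ _j : Fin p, ((n:ℤ) - 1) := Finset.sum_le_sum (by
            intro j _
            have := hA1 j
            have h3 : (1:ℤ) ≤ ((m j).headI : ℤ) := by exact_mod_cast this
            linarith)
      _ = (p:ℤ) * ((n:ℤ) - 1) := by
            rw [Finset.sum_const, Finset.card_univ, Fintype.card_fin, nsmul_eq_mul]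
    by_contra hc
    push_neg at hc
    have hc' : (p:ℤ) ≤ 2 := by exact_mod_cast Nat.lt_succ_iff.mp hc
    have h4 : (p:ℤ) * ((n:ℤ) - 1) ≤ 2 * ((n:ℤ) - 1) :=
      mul_le_mul_of_nonneg_right hc' (by linarith)
    linarith
  interval_cases p
  · -- p = 3
    obtain ⟨a, ha⟩ : ∃ x, (m 0).headI = x := ⟨_, rfl⟩
    obtain ⟨b, hb⟩ : ∃ x, (m 1).headI = x := ⟨_, rfl⟩
    obtain ⟨c, hc⟩ : ∃ x, (m 2).headI = x := ⟨_, rfl⟩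
    obtain ⟨s, hs⟩ : ∃ x, (m 0).length = x := ⟨_, rfl⟩
    obtain ⟨t, ht⟩ : ∃ x, (m 1).length = x := ⟨_, rfl⟩
    obtain ⟨u, hu⟩ : ∃ x, (m 2).length = x := ⟨_, rfl⟩
    have hm0 : m 0 = List.replicate s a := by rw [← ha, ← hs]; exact hrep 0
    have hm1 : m 1 = List.replicate t b := by rw [← hb, ← ht]; exact hrep 1
    have hm2 : m 2 = List.replicate u c := by rw [← hc, ← hu]; exact hrep 2
    have ea : a * s = n := by rw [← ha, ← hs]; exact hAL 0
    have eb : b * t = n := by rw [← hb, ← ht]; exact hAL 1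
    have ec : c * u = n := by rw [← hc, ← hu]; exact hAL 2
    have hs2 : 2 ≤ s := by rw [← hs]; exact hL2 0
    have ht2 : 2 ≤ t := by rw [← ht]; exact hL2 1
    have hu2 : 2 ≤ u := by rw [← hu]; exact hL2 2
    rw [Fin.sum_univ_three, ha, hb, hc] at hsum_eq
    have habc : a + b + c = n := by omega
    have hmul : n * (t*u + s*u + s*t) = n * (s*t*u) := by
      calc n * (t*u + s*u + s*t) = (a*s)*(t*u) + (b*t)*(s*u) + (c*u)*(s*t) := by
            rw [ea, eb, ec]; ring
      _ = (a+b+c) * (s*t*u) := by ring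
      _ = n * (s*t*u) := by rw [habc]
    have hkey : t*u + s*u + s*t = s*t*u := Nat.eq_of_mul_eq_mul_left hn hmul
    have hs6 : s ≤ 6 := bnd s t u hs2 ht2 hu2 hkey
    have ht6 : t ≤ 6 := bnd t s u ht2 hs2 hu2 (by linear_combination hkey)
    have hu6 : u ≤ 6 := bnd u s t hu2 hs2 ht2 (by linear_combination hkey)
    have hdvd : ∀ d : ℕ, d ∣ a → d ∣ b → d ∣ c → d = 1 := by
      intro d h0 h1 h2
      apply hindiv d
      intro j x hx
      rw [helem j x hx]
      fin_cases j
      · show d ∣ (m 0).headI; rw [ha]; exact h0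
      · show d ∣ (m 1).headI; rw [hb]; exact h1
      · show d ∣ (m 2).headI; rw [hc]; exact h2
    have hms : (Finset.univ.val.map m : Multiset (List ℕ)) = {m 0, m 1, m 2} := rfl
    rw [hms, hm0, hm1, hm2]
    clear hms hm0 hm1 hm2 ha hb hc hs ht hu hsum_eq hmul hFsum hGsum hGsum_ge hle hpt
    interval_cases s <;> interval_cases t <;> interval_cases u <;>
      first
      | omega
      | (have hmin : min a (min b c) = 1 := by
           apply hdvd
           · rcases (show a = min a (min b c) * 1 ∨ a = min a (min b c) * 2 ∨
                 a = min a (min b c) * 3 by omega) with h|h|h <;> exact ⟨_, h⟩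
           · rcases (show b = min a (min b c) * 1 ∨ b = min a (min b c) * 2 ∨
                 b = min a (min b c) * 3 by omega) with h|h|h <;> exact ⟨_, h⟩
           · rcases (show c = min a (min b c) * 1 ∨ c = min a (min b c) * 2 ∨
                 c = min a (min b c) * 3 by omega) with h|h|h <;> exact ⟨_, h⟩
         have hab : 1 ≤ a ∧ a ≤ 3 ∧ 1 ≤ b ∧ b ≤ 3 ∧ 1 ≤ c ∧ c ≤ 3 := by omega
         obtain ⟨h1, h2, h3, h4, h5, h6⟩ := hab
         clear hdvd
         interval_cases a <;> interval_cases b <;> interval_cases c <;>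
           first | omega | decide)
  · -- p = 4
    left
    have e0 := hAL 0
    have e1 := hAL 1
    have e2 := hAL 2
    have e3 := hAL 3
    rw [Fin.sum_univ_four] at hsum_eq
    have h20 := h2A 0
    have h21 := h2A 1
    have h22 := h2A 2
    have h23 := h2A 3
    have heq : 2 * (m 0).headI = n ∧ 2 * (m 1).headI = n ∧ 2 * (m 2).headI = n ∧
        2 * (m 3).headI = n := by omega
    obtain ⟨q0, q1, q2, q3⟩ := heq
    have ha0 : (m 0).headI = 1 := by
      apply hindiv
      intro j x hx
      rw [helem j x hx]
      fin_cases j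
      · exact dvd_rfl
      · exact ⟨1, show (m 1).headI = (m 0).headI * 1 by omega⟩
      · exact ⟨1, show (m 2).headI = (m 0).headI * 1 by omega⟩
      · exact ⟨1, show (m 3).headI = (m 0).headI * 1 by omega⟩
    have hn2 : n = 2 := by omega
    have hl0 : (m 0).length = 2 := by
      have := Nat.eq_of_mul_eq_mul_left (show 0 < (m 0).headI by omega)
        (e0.trans (show n = (m 0).headI * 2 by omega))
      omega
    have hl1 : (m 1).length = 2 := by
      have := Nat.eq_of_mul_eq_mul_left (show 0 < (m 1).headI by omega)
        (e1.trans (show n = (m 1).headI * 2 by omega))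
      omega
    have hl2' : (m 2).length = 2 := by
      have := Nat.eq_of_mul_eq_mul_left (show 0 < (m 2).headI by omega)
        (e2.trans (show n = (m 2).headI * 2 by omega))
      omega
    have hl3 : (m 3).length = 2 := by
      have := Nat.eq_of_mul_eq_mul_left (show 0 < (m 3).headI by omega)
        (e3.trans (show n = (m 3).headI * 2 by omega))
      omega
    have hms : (Finset.univ.val.map m : Multiset (List ℕ)) = {m 0, m 1, m 2, m 3} := by
      rfl
    have ha1 : (m 1).headI = 1 := by omega
    have ha2 : (m 2).headI = 1 := by omega
    have ha3 : (m 3).headI = 1 := by omega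
    have r0 := hrep 0
    have r1 := hrep 1
    have r2 := hrep 2
    have r3 := hrep 3
    rw [hl0, ha0] at r0
    rw [hl1, ha1] at r1
    rw [hl2', ha2] at r2
    rw [hl3, ha3] at r3
    rw [hms, r0, r1, r2, r3]
    decide
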